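/- Let n be a nonnegative integer and let a, c be complex numbers with (a−n)_{2n} ≠ 0, (1−a)_n ≠ 0, (a)_n ≠ 0, and (1+c−a−n)_{2n} ≠ 0. Then _3F_2(−n, a−c−n, c ; (a−n)/2, (1+a−n)/2 ; 1/4) = [(1+c−a)_n (a−c)_n / ((1−a)_n (a)_n)] · _3F_2(−n, 1−a−n, c ; (1+c−a−n)/2, (2+c−a−n)/2 ; 1/4), both sides being finite sums over k from 0 to n. -/

import Mathlib

open Finset

/-- The rising factorial (Pochhammer symbol) `(a)_k = a(a+1)⋯(a+k-1)`. -/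
noncomputable def poch (a : ℂ) (k : ℕ) : ℂ := ∏ i ∈ Finset.range k, (a + i)

lemma poch_zero (a : ℂ) : poch a 0 = 1 := by simp [poch]

lemma poch_succ (a : ℂ) (k : ℕ) : poch a (k + 1) = poch a k * (a + k) :=
  Finset.prod_range_succ _ _

lemma poch_one (a : ℂ) : poch a 1 = a := by simp [poch]

lemma poch_add (a : ℂ) (m l : ℕ) : poch a (m + l) = poch a m * poch (a + m) l := by
  unfold poch
  rw [Finset.prod_range_add]
  congr 1
  refine Finset.prod_congr rfl fun i _ => ?_
  push_cast
  ring

lemma poch_succ_left (a : ℂ) (k : ℕ) : poch a (k + 1) = a * poch (a + 1) k := by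
  rw [show k + 1 = 1 + k by omega, poch_add, poch_one]
  norm_num

lemma poch_reflect (a : ℂ) (m : ℕ) : poch a m = (-1) ^ m * poch (1 - a - m) m := by
  unfold poch
  rw [← Finset.prod_range_reflect (fun i => a + i) m]
  rw [show ((-1 : ℂ)) ^ m = ∏ _i ∈ Finset.range m, (-1 : ℂ) by simp, ← Finset.prod_mul_distrib]
  refine Finset.prod_congr rfl fun i hi => ?_
  rw [Finset.mem_range] at hi
  have hle : 1 + i ≤ m := by omega
  have h2 : m - 1 - i = m - (1 + i) := by omega
  rw [h2, Nat.cast_sub hle]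
  push_cast
  ring

lemma poch_ne_zero_of_le {a : ℂ} {N : ℕ} (h : poch a N ≠ 0) {m : ℕ} (hm : m ≤ N) :
    poch a m ≠ 0 := by
  intro h0
  apply h
  rw [show N = m + (N - m) by omega, poch_add, h0, zero_mul]

lemma poch_half (x : ℂ) (k : ℕ) :
    poch (x / 2) k * poch ((x + 1) / 2) k * 4 ^ k = poch x (2 * k) := by
  induction k with
  | zero => simp [poch]
  | succ k ih =>
    rw [show 2 * (k + 1) = 2 * k + 1 + 1 by ring, poch_succ, poch_succ, poch_succ, poch_succ]
    rw [← ih]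
    push_cast
    ring

lemma poch_neg_nat (n k : ℕ) :
    poch (-(n : ℂ)) k = (-1) ^ k * (n.descFactorial k : ℂ) := by
  induction k with
  | zero => simp [poch]
  | succ k ih =>
    rw [poch_succ, ih, Nat.descFactorial_succ]
    rcases le_or_gt k n with h | h
    · rw [Nat.cast_mul, Nat.cast_sub h]
      push_cast
      ring
    · rw [Nat.descFactorial_eq_zero_iff_lt.2 h]
      simp

lemma neg_one_pow_eq {s t u : ℕ} (h : s + t = 2 * u) : ((-1 : ℂ)) ^ s = (-1) ^ t := by
  have h2 : ((-1 : ℂ)) ^ s * (-1) ^ t = 1 := by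
    rw [← pow_add, h, pow_mul]; norm_num
  have h3 : ((-1 : ℂ)) ^ t * (-1) ^ t = 1 := by
    rw [← pow_add, show t + t = 2 * t by ring, pow_mul]; norm_num
  exact mul_right_cancel₀ (pow_ne_zero t (by norm_num)) (h2.trans h3.symm)

lemma vand (k : ℕ) : ∀ β γ : ℂ,
    ∑ j ∈ range (k + 1), (-1 : ℂ) ^ j * (k.choose j : ℂ) * poch β j * poch (γ + j) (k - j)
      = poch (γ - β) k := by
  induction k with
  | zero => intro β γ; simp [poch]
  | succ k ih =>
    intro β γ
    set u1 : ℕ → ℂ := fun j => (-1 : ℂ) ^ j * (k.choose j : ℂ) * poch β (j + 1) *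
      poch (γ + j + 1) (k - j) with hu1
    set u2 : ℕ → ℂ := fun j => (-1 : ℂ) ^ j * (k.choose (j + 1) : ℂ) * poch β (j + 1) *
      poch (γ + j + 1) (k - j) with hu2
    set v : ℕ → ℂ := fun j => (-1 : ℂ) ^ j * (k.choose j : ℂ) * poch β j *
      poch (γ + j) (k + 1 - j) with hv
    have hsplit : ∑ j ∈ range (k + 1 + 1),
        (-1 : ℂ) ^ j * ((k + 1).choose j : ℂ) * poch β j * poch (γ + j) (k + 1 - j)
        = (∑ j ∈ range (k + 1), (-(u1 j) - u2 j)) + poch γ (k + 1) := by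
      rw [Finset.sum_range_succ']
      congr 1
      · refine Finset.sum_congr rfl fun j hj => ?_
        rw [Nat.choose_succ_succ]
        simp only [hu1, hu2, Nat.succ_eq_add_one]
        rw [show k + 1 - (j + 1) = k - j by omega]
        push_cast
        ring
      · simp [poch_zero]
    have h1 : ∑ j ∈ range (k + 1), u2 j = ∑ j ∈ range k, u2 j := by
      rw [Finset.sum_range_succ]
      simp [hu2, Nat.choose_succ_self]
    have h2 : ∑ j ∈ range (k + 1), v j = (∑ j ∈ range k, -(u2 j)) + poch γ (k + 1) := by
      rw [Finset.sum_range_succ']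
      congr 1
      · refine Finset.sum_congr rfl fun j hj => ?_
        simp only [hu2, hv]
        rw [show k + 1 - (j + 1) = k - j by omega]
        push_cast
        ring
      · simp only [hv]
        simp [poch_zero]
    have hu2sum : ∑ j ∈ range (k + 1), u2 j = poch γ (k + 1) - ∑ j ∈ range (k + 1), v j := by
      rw [h1, h2, Finset.sum_neg_distrib]
      ring
    have hfinal : ∑ j ∈ range (k + 1), (v j - u1 j) = (γ - β) * poch (γ + 1 - β) k := by
      rw [← ih β (γ + 1), Finset.mul_sum]
      refine Finset.sum_congr rfl fun j hj => ?_
      rw [Finset.mem_range] at hj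
      simp only [hv, hu1]
      rw [show k + 1 - j = (k - j) + 1 by omega, poch_succ_left (γ + j) (k - j),
        poch_succ β j, show γ + (j : ℂ) + 1 = γ + 1 + j by ring]
      ring
    rw [hsplit]
    rw [Finset.sum_sub_distrib, Finset.sum_neg_distrib, hu2sum]
    rw [show -∑ j ∈ range (k + 1), u1 j - (poch γ (k + 1) - ∑ j ∈ range (k + 1), v j)
      + poch γ (k + 1) = ∑ j ∈ range (k + 1), v j - ∑ j ∈ range (k + 1), u1 j by ring]
    rw [← Finset.sum_sub_distrib, hfinal, poch_succ_left (γ - β) k,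
      show γ - β + 1 = γ + 1 - β by ring]

lemma star (B C : ℂ) (k : ℕ) (hB : poch B (2 * k) ≠ 0) :
    poch C k * poch (B - C) k / poch B (2 * k)
      = ∑ j ∈ range (k + 1), (-1 : ℂ) ^ j * (k.choose j : ℂ) * poch C (k + j) / poch B (k + j) := by
  have hv := vand k (C + k) (B + k)
  rw [show B + (k : ℂ) - (C + k) = B - C by ring] at hv
  rw [← hv, Finset.mul_sum, Finset.sum_div]
  refine Finset.sum_congr rfl fun j hj => ?_
  rw [Finset.mem_range] at hj
  have hCkj : poch C (k + j) = poch C k * poch (C + k) j := poch_add C k j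
  have hBsplit : poch B (2 * k) = poch B (k + j) * poch (B + (k + j : ℕ)) (k - j) := by
    rw [← poch_add]
    congr 1
    omega
  have hX : poch (B + ((k + j : ℕ) : ℂ)) (k - j) ≠ 0 := by
    intro h0; apply hB; rw [hBsplit, h0, mul_zero]
  have hBkj : poch B (k + j) ≠ 0 := by
    intro h0; apply hB; rw [hBsplit, h0, zero_mul]
  rw [show B + (k : ℂ) + (j : ℂ) = B + ((k + j : ℕ) : ℂ) by push_cast; ring]
  rw [hCkj, hBsplit]
  rw [div_eq_div_iff (mul_ne_zero hBkj hX) hBkj]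
  ring

lemma term_expand (n k : ℕ) (hk : k ≤ n) (B C : ℂ) (hB : poch B (2 * n) ≠ 0) :
    poch (-(n : ℂ)) k * poch C k * poch (B - C) k /
      ((Nat.factorial k : ℂ) * poch (B / 2) k * poch ((B + 1) / 2) k) * (1 / 4 : ℂ) ^ k
    = ∑ j ∈ range (k + 1),
        (-1 : ℂ) ^ (k + j) * (n.choose k : ℂ) * (k.choose j : ℂ) * poch C (k + j) /
          poch B (k + j) := by
  have hB2k : poch B (2 * k) ≠ 0 := poch_ne_zero_of_le hB (by omega)
  have hfac : ((Nat.factorial k : ℂ)) ≠ 0 := by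
    exact_mod_cast Nat.cast_ne_zero.2 (Nat.factorial_ne_zero k)
  have h4 : ((1 : ℂ) / 4) ^ k = 1 / 4 ^ k := by
    rw [div_pow, one_pow]
  rw [h4, div_mul_div_comm, mul_one]
  have hden : (Nat.factorial k : ℂ) * poch (B / 2) k * poch ((B + 1) / 2) k * 4 ^ k
      = (Nat.factorial k : ℂ) * poch B (2 * k) := by
    rw [← poch_half B k]; ring
  rw [hden]
  have hnum : poch (-(n : ℂ)) k * poch C k * poch (B - C) k
      = ((Nat.factorial k : ℂ) * ((-1) ^ k * (n.choose k : ℂ))) *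
        (poch C k * poch (B - C) k) := by
    rw [poch_neg_nat, Nat.descFactorial_eq_factorial_mul_choose]
    push_cast
    ring
  rw [hnum, mul_assoc ((Nat.factorial k : ℂ)) _ _, mul_div_mul_left _ _ hfac,
    mul_div_assoc, star B C k hB2k, Finset.mul_sum]
  refine Finset.sum_congr rfl fun j hj => ?_
  rw [pow_add]
  ring

lemma double_reverse (n : ℕ) (g g' : ℕ → ℕ → ℂ)
    (H : ∀ k j, j ≤ k → k ≤ n → g k j = g' (n - j) (n - k)) :
    ∑ k ∈ range (n + 1), ∑ j ∈ range (k + 1), g k j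
      = ∑ k ∈ range (n + 1), ∑ j ∈ range (k + 1), g' k j := by
  rw [Finset.sum_sigma', Finset.sum_sigma']
  refine Finset.sum_nbij' (fun p => ⟨n - p.2, n - p.1⟩) (fun p => ⟨n - p.2, n - p.1⟩)
    ?_ ?_ ?_ ?_ ?_
  · intro p hp
    simp only [Finset.mem_sigma, Finset.mem_range] at hp ⊢
    omega
  · intro p hp
    simp only [Finset.mem_sigma, Finset.mem_range] at hp ⊢
    omega
  · intro p hp
    simp only [Finset.mem_sigma, Finset.mem_range] at hp
    ext <;> simp <;> omega
  · intro p hp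
    simp only [Finset.mem_sigma, Finset.mem_range] at hp
    ext <;> simp <;> omega
  · intro p hp
    simp only [Finset.mem_sigma, Finset.mem_range] at hp
    exact H p.1 p.2 (by omega) (by omega)

lemma reverse_term (n k j : ℕ) (hj : j ≤ k) (hk : k ≤ n) (a c : ℂ)
    (hB : poch (a - (n : ℂ)) (2 * n) ≠ 0) (hB' : poch (1 + c - a - (n : ℂ)) (2 * n) ≠ 0) :
    (-1 : ℂ) ^ (k + j) * (n.choose k : ℂ) * (k.choose j : ℂ) *
        poch (a - c - (n : ℂ)) (k + j) / poch (a - (n : ℂ)) (k + j)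
    = poch (a - c - (n : ℂ)) (2 * n) / poch (a - (n : ℂ)) (2 * n) *
      ((-1 : ℂ) ^ (n - j + (n - k)) * (n.choose (n - j) : ℂ) * ((n - j).choose (n - k) : ℂ) *
        poch (1 - a - (n : ℂ)) (n - j + (n - k)) / poch (1 + c - a - (n : ℂ)) (n - j + (n - k))) := by
  set B : ℂ := a - (n : ℂ) with hBdef
  set C : ℂ := a - c - (n : ℂ) with hCdef
  set B' : ℂ := 1 + c - a - (n : ℂ) with hB'def
  set C' : ℂ := 1 - a - (n : ℂ) with hC'def
  set m : ℕ := k + j with hmdef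
  set r : ℕ := n - j + (n - k) with hrdef
  have hmr : m + r = 2 * n := by omega
  have hmrC : (m : ℂ) + (r : ℂ) = 2 * (n : ℂ) := by exact_mod_cast congrArg Nat.cast hmr
  -- nonzeroness of poch C (2n)
  have hC2n : poch C (2 * n) ≠ 0 := by
    rw [poch_reflect C (2 * n), show (1 : ℂ) - C - ((2 * n : ℕ) : ℂ) = B' by
      rw [hCdef, hB'def]; push_cast; ring]
    exact mul_ne_zero (pow_ne_zero _ (by norm_num)) hB'
  have hB2 : poch B (2 * n) = poch B m * poch (B + (m : ℂ)) r := by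
    rw [← poch_add]; congr 1; omega
  have hC2 : poch C (2 * n) = poch C m * poch (C + (m : ℂ)) r := by
    rw [← poch_add]; congr 1; omega
  have hX : poch (B + (m : ℂ)) r ≠ 0 := fun h0 => hB (by rw [hB2, h0, mul_zero])
  have hY : poch (C + (m : ℂ)) r ≠ 0 := fun h0 => hC2n (by rw [hC2, h0, mul_zero])
  have hBm : poch B m ≠ 0 := fun h0 => hB (by rw [hB2, h0, zero_mul])
  have hCm : poch C m ≠ 0 := fun h0 => hC2n (by rw [hC2, h0, zero_mul])
  have h : poch (B + (m : ℂ)) r = (-1) ^ r * poch C' r := by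
    rw [poch_reflect (B + (m : ℂ)) r]
    congr 2
    rw [hBdef, hC'def]
    linear_combination -hmrC
  have h' : poch (C + (m : ℂ)) r = (-1) ^ r * poch B' r := by
    rw [poch_reflect (C + (m : ℂ)) r]
    congr 2
    rw [hCdef, hB'def]
    linear_combination -hmrC
  have hsign : ((-1 : ℂ)) ^ (k + j) = (-1) ^ r := neg_one_pow_eq (u := n) (by omega)
  have b1 : n.choose (n - j) = n.choose j := Nat.choose_symm (hj.trans hk)
  have b2 : (n - j).choose (n - k) = (n - j).choose (k - j) := by
    have h2 : n - k ≤ n - j := by omega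
    have h3 := Nat.choose_symm h2
    rw [show n - j - (n - k) = k - j by omega] at h3
    exact h3.symm
  have hmul : ((n.choose k : ℂ)) * (k.choose j : ℂ)
      = (n.choose j : ℂ) * ((n - j).choose (k - j) : ℂ) := by
    exact_mod_cast congrArg Nat.cast (Nat.choose_mul (n := n) hj)
  have hBr' : poch B' r ≠ 0 := poch_ne_zero_of_le hB' (show r ≤ 2 * n by omega)
  have hsq : ((-1 : ℂ)) ^ r * (-1) ^ r = 1 := by
    rw [← pow_add, show r + r = 2 * r by ring, pow_mul]; norm_num
  rw [b1, b2, hsign, hC2, hB2, div_mul_div_comm, div_eq_div_iff hBm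
    (mul_ne_zero (mul_ne_zero hBm hX) hBr')]
  rw [h, h']
  generalize hs : ((-1 : ℂ)) ^ r = s
  linear_combination (s * s * poch C m * poch B m * poch C' r * poch B' r) * hmul

theorem stmt_15 (n : ℕ) (a c : ℂ)
    (han : poch (a - (n : ℂ)) (2 * n) ≠ 0) (h1a : poch (1 - a) n ≠ 0)
    (ha : poch a n ≠ 0) (hca : poch (1 + c - a - (n : ℂ)) (2 * n) ≠ 0) :
    ∑ k ∈ range (n + 1),
      (poch (-(n : ℂ)) k * poch (a - c - (n : ℂ)) k * poch c k) /
        ((Nat.factorial k : ℂ) * poch ((a - (n : ℂ)) / 2) k *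
          poch ((1 + a - (n : ℂ)) / 2) k) * (1 / 4 : ℂ) ^ k
    = poch (1 + c - a) n * poch (a - c) n / (poch (1 - a) n * poch a n) *
      ∑ k ∈ range (n + 1),
        (poch (-(n : ℂ)) k * poch (1 - a - (n : ℂ)) k * poch c k) /
          ((Nat.factorial k : ℂ) * poch ((1 + c - a - (n : ℂ)) / 2) k *
            poch ((2 + c - a - (n : ℂ)) / 2) k) * (1 / 4 : ℂ) ^ k := by
  set g : ℕ → ℕ → ℂ := fun k j =>
    (-1 : ℂ) ^ (k + j) * (n.choose k : ℂ) * (k.choose j : ℂ) *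
      poch (a - c - (n : ℂ)) (k + j) / poch (a - (n : ℂ)) (k + j) with hg
  set g' : ℕ → ℕ → ℂ := fun k j =>
    poch (a - c - (n : ℂ)) (2 * n) / poch (a - (n : ℂ)) (2 * n) *
      ((-1 : ℂ) ^ (k + j) * (n.choose k : ℂ) * (k.choose j : ℂ) *
        poch (1 - a - (n : ℂ)) (k + j) / poch (1 + c - a - (n : ℂ)) (k + j)) with hg'
  have hL : ∑ k ∈ range (n + 1),
      (poch (-(n : ℂ)) k * poch (a - c - (n : ℂ)) k * poch c k) /
        ((Nat.factorial k : ℂ) * poch ((a - (n : ℂ)) / 2) k *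
          poch ((1 + a - (n : ℂ)) / 2) k) * (1 / 4 : ℂ) ^ k
      = ∑ k ∈ range (n + 1), ∑ j ∈ range (k + 1), g k j := by
    refine Finset.sum_congr rfl fun k hk => ?_
    rw [Finset.mem_range] at hk
    rw [show poch c k = poch ((a - (n : ℂ)) - (a - c - (n : ℂ))) k by
        rw [show (a - (n : ℂ)) - (a - c - (n : ℂ)) = c by ring],
      show (1 + a - (n : ℂ)) / 2 = ((a - (n : ℂ)) + 1) / 2 by ring]
    exact term_expand n k (by omega) (a - (n : ℂ)) (a - c - (n : ℂ)) han
  have hR : ∑ k ∈ range (n + 1),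
      (poch (-(n : ℂ)) k * poch (1 - a - (n : ℂ)) k * poch c k) /
        ((Nat.factorial k : ℂ) * poch ((1 + c - a - (n : ℂ)) / 2) k *
          poch ((2 + c - a - (n : ℂ)) / 2) k) * (1 / 4 : ℂ) ^ k
      = ∑ k ∈ range (n + 1), ∑ j ∈ range (k + 1),
          (-1 : ℂ) ^ (k + j) * (n.choose k : ℂ) * (k.choose j : ℂ) *
            poch (1 - a - (n : ℂ)) (k + j) / poch (1 + c - a - (n : ℂ)) (k + j) := by
    refine Finset.sum_congr rfl fun k hk => ?_
    rw [Finset.mem_range] at hk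
    rw [show poch c k = poch ((1 + c - a - (n : ℂ)) - (1 - a - (n : ℂ))) k by
        rw [show (1 + c - a - (n : ℂ)) - (1 - a - (n : ℂ)) = c by ring],
      show (2 + c - a - (n : ℂ)) / 2 = ((1 + c - a - (n : ℂ)) + 1) / 2 by ring]
    exact term_expand n k (by omega) (1 + c - a - (n : ℂ)) (1 - a - (n : ℂ)) hca
  have hrev : ∑ k ∈ range (n + 1), ∑ j ∈ range (k + 1), g k j
      = ∑ k ∈ range (n + 1), ∑ j ∈ range (k + 1), g' k j := by
    refine double_reverse n g g' fun k j hj hk => ?_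
    exact reverse_term n k j hj hk a c han hca
  have hpref : poch (1 + c - a) n * poch (a - c) n / (poch (1 - a) n * poch a n)
      = poch (a - c - (n : ℂ)) (2 * n) / poch (a - (n : ℂ)) (2 * n) := by
    have e1 : poch (1 + c - a) n = (-1) ^ n * poch (a - c - (n : ℂ)) n := by
      rw [poch_reflect (1 + c - a) n]
      congr 2
      ring
    have e2 : poch (1 - a) n = (-1) ^ n * poch (a - (n : ℂ)) n := by
      rw [poch_reflect (1 - a) n]
      congr 2
      ring
    have e3 : poch (a - c - (n : ℂ)) (2 * n) = poch (a - c - (n : ℂ)) n * poch (a - c) n := by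
      rw [show 2 * n = n + n by ring, poch_add]
      congr 2
      ring
    have e4 : poch (a - (n : ℂ)) (2 * n) = poch (a - (n : ℂ)) n * poch a n := by
      rw [show 2 * n = n + n by ring, poch_add]
      congr 2
      ring
    rw [e1, e2, e3, e4, mul_assoc, mul_assoc,
      mul_div_mul_left _ _ (pow_ne_zero n (by norm_num : (-1 : ℂ) ≠ 0))]
  rw [hL, hR, hrev, hpref, hg']
  simp_rw [← Finset.mul_sum]
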